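/- Let T > 0, K ≥ 0, R ≥ 0, and let g : [0,T] → [0,∞) be differentiable with g(0) ≤ R² and g'(t) ≤ K (g(t)+1)² for all t ∈ [0,T]. If K T (1+R²) ≤ 1/2, then g(t) ≤ 2(1+R²) for every t ∈ [0,T]. -/

import Mathlib

/-- nonlinear Gronwall comparison.  Let `T > 0`, `K ≥ 0`, `R ≥ 0`, and
let `g : [0,T] → [0,∞)` be differentiable with `g(0) ≤ R²` and `g'(t) ≤ K (g(t)+1)²` on
`[0,T]`.  If `K T (1+R²) ≤ 1/2`, then `g(t) ≤ 2(1+R²)` for every `t ∈ [0,T]`. -/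
theorem nonlinear_gronwall
    (T K R : ℝ) (hT : 0 < T) (hK : 0 ≤ K) (hR : 0 ≤ R)
    (g g' : ℝ → ℝ)
    (hg_nonneg : ∀ t ∈ Set.Icc (0 : ℝ) T, 0 ≤ g t)
    (hg_deriv : ∀ t ∈ Set.Icc (0 : ℝ) T, HasDerivWithinAt g (g' t) (Set.Icc (0 : ℝ) T) t)
    (hg0 : g 0 ≤ R ^ 2)
    (hg' : ∀ t ∈ Set.Icc (0 : ℝ) T, g' t ≤ K * (g t + 1) ^ 2)
    (hsmall : K * T * (1 + R ^ 2) ≤ 1 / 2) :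
    ∀ t ∈ Set.Icc (0 : ℝ) T, g t ≤ 2 * (1 + R ^ 2) := by
  set ψ : ℝ → ℝ := fun t => K * t + (g t + 1)⁻¹ with hψ
  have hpos : ∀ t ∈ Set.Icc (0 : ℝ) T, 0 < g t + 1 := fun t ht => by
    have := hg_nonneg t ht; linarith
  have hψderiv : ∀ t ∈ Set.Icc (0 : ℝ) T,
      HasDerivWithinAt ψ (K - g' t / (g t + 1) ^ 2) (Set.Icc (0 : ℝ) T) t := by
    intro t ht
    have h1 : HasDerivWithinAt (fun s => g s + 1) (g' t) (Set.Icc (0 : ℝ) T) t :=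
      (hg_deriv t ht).add_const 1
    have h2 := h1.inv (ne_of_gt (hpos t ht))
    have h3 : HasDerivWithinAt (fun s : ℝ => K * s) K (Set.Icc (0 : ℝ) T) t := by
      simpa using (hasDerivWithinAt_id t (Set.Icc (0:ℝ) T)).const_mul K
    have := h3.add h2
    refine this.congr_deriv ?_
    ring
  have hcont : ContinuousOn ψ (Set.Icc (0 : ℝ) T) :=
    fun t ht => (hψderiv t ht).continuousWithinAt
  have hmono : MonotoneOn ψ (Set.Icc (0 : ℝ) T) := by
    apply monotoneOn_of_deriv_nonneg (convex_Icc 0 T) hcont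
    · intro t ht
      rw [interior_Icc] at ht
      exact ((hψderiv t (Set.mem_Icc_of_Ioo ht)).hasDerivAt
        (Icc_mem_nhds ht.1 ht.2)).differentiableAt.differentiableWithinAt
    · intro t ht
      rw [interior_Icc] at ht
      have ht' : t ∈ Set.Icc (0 : ℝ) T := Set.mem_Icc_of_Ioo ht
      have hd := ((hψderiv t ht').hasDerivAt (Icc_mem_nhds ht.1 ht.2)).deriv
      rw [hd]
      have hsq : (0 : ℝ) < (g t + 1) ^ 2 := pow_pos (hpos t ht') 2
      have := hg' t ht'
      rw [sub_nonneg, div_le_iff₀ hsq]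
      linarith
  intro t ht
  have h0 : (0 : ℝ) ∈ Set.Icc (0 : ℝ) T := Set.mem_Icc.mpr ⟨le_refl 0, le_of_lt hT⟩
  have key := hmono h0 ht ht.1
  simp only [hψ, mul_zero, zero_add] at key
  -- key : (g 0 + 1)⁻¹ ≤ K * t + (g t + 1)⁻¹
  have hR2 : (0 : ℝ) < 1 + R ^ 2 := by positivity
  have h01 : (1 + R ^ 2)⁻¹ ≤ (g 0 + 1)⁻¹ := by
    apply inv_anti₀ (hpos 0 h0)
    linarith
  have hKt : K * t ≤ K * T := mul_le_mul_of_nonneg_left ht.2 hK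
  have hKT : K * T ≤ 1 / (2 * (1 + R ^ 2)) := by
    rw [le_div_iff₀ (by positivity)]
    nlinarith
  have hfin : (2 * (1 + R ^ 2))⁻¹ ≤ (g t + 1)⁻¹ := by
    have hinv : (1 + R ^ 2)⁻¹ = 2 * (2 * (1 + R ^ 2))⁻¹ := by
      field_simp
    rw [one_div] at hKT
    linarith [h01, hKt, hKT, key, hinv]
  have := (inv_le_inv₀ (by positivity : (0:ℝ) < 2 * (1 + R ^ 2)) (hpos t ht)).mp hfin
  linarith
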